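/- If every edge of a connected graph G on n vertices is either a cut edge or lies on a cycle of even length, then PI(G) = |E(G)| · (n - 2). -/

import Mathlib

open SimpleGraph Finset
open scoped Classical

variable {V : Type*}

/-- Number of vertices strictly closer to `x` than to `y` (excluding `x` and `y`). -/
noncomputable def nclose (G : SimpleGraph V) (x y : V) : ℕ :=
  Nat.card {w : V | w ≠ x ∧ w ≠ y ∧ G.dist w x < G.dist w y}

/-- The contribution `PI(e) = n_{xy}(x) + n_{xy}(y)` of an edge. -/
noncomputable def PIedge (G : SimpleGraph V) : Sym2 V → ℕ :=
  Sym2.lift ⟨fun x y => nclose G x y + nclose G y x, fun _ _ => add_comm _ _⟩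

/-- The vertex PI index of a graph. -/
noncomputable def PI [Fintype V] (G : SimpleGraph V) : ℕ :=
  ∑ e ∈ G.edgeFinset, PIedge G e

/-- A cactus: connected, and any two cycles share at most one vertex. -/
def IsCactus (G : SimpleGraph V) : Prop :=
  G.Connected ∧ ∀ (u v : V) (c₁ : G.Walk u u) (c₂ : G.Walk v v),
    c₁.IsCycle → c₂.IsCycle → {e | e ∈ c₁.edges} ≠ {e | e ∈ c₂.edges} →
    Set.ncard {x | x ∈ c₁.support ∧ x ∈ c₂.support} ≤ 1

/-- Splitting a geodesic at a support vertex yields two geodesics. -/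
lemma split_dist (G : SimpleGraph V) (hconn : G.Connected) {w x z : V}
    (p : G.Walk w x) (hp : p.length = G.dist w x) (hz : z ∈ p.support) :
    (p.takeUntil z hz).length = G.dist w z ∧ (p.dropUntil z hz).length = G.dist z x := by
  have h1 : G.dist w z ≤ (p.takeUntil z hz).length := SimpleGraph.dist_le _
  have h2 : G.dist z x ≤ (p.dropUntil z hz).length := SimpleGraph.dist_le _
  have h3 : G.dist w x ≤ G.dist w z + G.dist z x := hconn.dist_triangle
  have hsum : (p.takeUntil z hz).length + (p.dropUntil z hz).length = p.length := by
    rw [← SimpleGraph.Walk.length_append, SimpleGraph.Walk.take_spec]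
  omega

/-- From a vertex equidistant to the two endpoints of an edge, we can build an
odd cycle through that edge. -/
lemma exists_odd_cycle (G : SimpleGraph V) (hconn : G.Connected) {x y w : V}
    (hadj : G.Adj x y) (hwx : w ≠ x) (hwy : w ≠ y)
    (hd : G.dist w x = G.dist w y) :
    ∃ c : G.Walk x x, c.IsCycle ∧ s(x, y) ∈ c.edges ∧ Odd c.length := by
  obtain ⟨P, hPp, hPl⟩ := hconn.exists_path_of_dist w x
  obtain ⟨Q, hQp, hQl⟩ := hconn.exists_path_of_dist w y
  classical
  have hxy : x ≠ y := hadj.ne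
  -- choose the common vertex of P and Q farthest from w
  let S : Finset V := P.support.toFinset ∩ Q.support.toFinset
  have hwS : w ∈ S := by
    simp [S, P.start_mem_support, Q.start_mem_support]
  obtain ⟨z, hzS, hzmax⟩ := S.exists_max_image (fun v => G.dist w v) ⟨w, hwS⟩
  have hzP : z ∈ P.support := by
    have := Finset.mem_inter.mp hzS; simpa using this.1
  have hzQ : z ∈ Q.support := by
    have := Finset.mem_inter.mp hzS; simpa using this.2
  have hPsplit := split_dist G hconn P hPl hzP
  have hQsplit := split_dist G hconn Q hQl hzQ
  set P₂ := P.dropUntil z hzP with hP₂def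
  set Q₂ := Q.dropUntil z hzQ with hQ₂def
  have hP₂p : P₂.IsPath := hPp.dropUntil hzP
  have hQ₂p : Q₂.IsPath := hQp.dropUntil hzQ
  have hP₂l : P₂.length = G.dist z x := hPsplit.2
  have hQ₂l : Q₂.length = G.dist z y := hQsplit.2
  have hdistadd : G.dist w z + G.dist z x = G.dist w x := by
    have := SimpleGraph.Walk.take_spec P hzP
    have hs : (P.takeUntil z hzP).length + P₂.length = P.length := by
      rw [← SimpleGraph.Walk.length_append, SimpleGraph.Walk.take_spec]
    omega
  have hdistadd' : G.dist w z + G.dist z y = G.dist w y := by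
    have hs : (Q.takeUntil z hzQ).length + Q₂.length = Q.length := by
      rw [← SimpleGraph.Walk.length_append, SimpleGraph.Walk.take_spec]
    omega
  -- z is distinct from x and y
  have hzx : z ≠ x := by
    intro hzx
    have h1 : G.dist w z + G.dist z y = G.dist w y := hdistadd'
    rw [hzx] at h1
    have h0 : G.dist x y = 0 := by omega
    exact hxy ((hconn.dist_eq_zero_iff).mp h0)
  have hzy : z ≠ y := by
    intro hzy
    have h1 : G.dist w z + G.dist z x = G.dist w x := hdistadd
    rw [hzy] at h1
    have h0 : G.dist y x = 0 := by omega
    exact hxy ((hconn.dist_eq_zero_iff).mp h0).symm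
  have hP₂pos : 1 ≤ P₂.length := by
    rcases Nat.eq_zero_or_pos P₂.length with h0 | h1
    · exact absurd (SimpleGraph.Walk.eq_of_length_eq_zero h0) hzx
    · exact h1
  have hQ₂pos : 1 ≤ Q₂.length := by
    rcases Nat.eq_zero_or_pos Q₂.length with h0 | h1
    · exact absurd (SimpleGraph.Walk.eq_of_length_eq_zero h0) hzy
    · exact h1
  have hll : P₂.length = Q₂.length := by omega
  -- the suffixes meet only at z
  have hmeet : ∀ u, u ∈ P₂.support → u ∈ Q₂.support → u = z := by
    intro u huP huQ
    have huP' : u ∈ P.support := SimpleGraph.Walk.support_dropUntil_subset P hzP huP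
    have huQ' : u ∈ Q.support := SimpleGraph.Walk.support_dropUntil_subset Q hzQ huQ
    have huS : u ∈ S := by simp [S, huP', huQ']
    have hmax : G.dist w u ≤ G.dist w z := hzmax u huS
    have hsplit := split_dist G hconn P₂ hP₂l huP
    have hsum2 : (P₂.takeUntil u huP).length + (P₂.dropUntil u huP).length = P₂.length := by
      rw [← SimpleGraph.Walk.length_append, SimpleGraph.Walk.take_spec]
    have htri : G.dist w x ≤ G.dist w u + G.dist u x := hconn.dist_triangle
    have hz0 : (P₂.takeUntil u huP).length = 0 := by omega
    exact (SimpleGraph.Walk.eq_of_length_eq_zero hz0).symm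
  -- build the cycle
  have hR : (Q₂.reverse.append P₂).IsPath := by
    rw [SimpleGraph.Walk.isPath_def, SimpleGraph.Walk.support_append]
    rw [List.nodup_append]
    refine ⟨by rw [SimpleGraph.Walk.support_reverse]; exact List.nodup_reverse.mpr hQ₂p.support_nodup, ?_, ?_⟩
    · exact hP₂p.support_nodup.sublist (List.tail_sublist _)
    · intro u huQ b huP hub
      subst hub
      have huQ' : u ∈ Q₂.support := by
        rw [SimpleGraph.Walk.support_reverse, List.mem_reverse] at huQ; exact huQ
      have huP' : u ∈ P₂.support := List.mem_of_mem_tail huP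
      have := hmeet u huP' huQ'
      subst this
      have : P₂.support = u :: P₂.support.tail := P₂.support_eq_cons
      have hnd := hP₂p.support_nodup
      rw [this, List.nodup_cons] at hnd
      exact hnd.1 huP
  have hRe : s(x, y) ∉ (Q₂.reverse.append P₂).edges := by
    rw [SimpleGraph.Walk.edges_append, List.mem_append]
    rintro (hQe | hPe)
    · rw [SimpleGraph.Walk.edges_reverse, List.mem_reverse] at hQe
      have hxQ : x ∈ Q₂.support := Q₂.fst_mem_support_of_mem_edges hQe
      exact hzx ((hmeet x P₂.end_mem_support hxQ).symm)
    · have hyP : y ∈ P₂.support := P₂.snd_mem_support_of_mem_edges hPe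
      exact hzy ((hmeet y hyP Q₂.end_mem_support).symm)
  refine ⟨SimpleGraph.Walk.cons hadj (Q₂.reverse.append P₂), ?_, ?_, ?_⟩
  · exact (SimpleGraph.Walk.cons_isCycle_iff _ hadj).mpr ⟨hR, hRe⟩
  · simp
  · refine ⟨P₂.length, ?_⟩
    simp only [SimpleGraph.Walk.length_cons, SimpleGraph.Walk.length_append,
      SimpleGraph.Walk.length_reverse]
    omega

lemma nclose_add_eq (G : SimpleGraph V) [Fintype V] {x y : V} (hxy : x ≠ y)
    (hne : ∀ w, w ≠ x → w ≠ y → G.dist w x ≠ G.dist w y) :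
    nclose G x y + nclose G y x = Fintype.card V - 2 := by
  classical
  have hc : ∀ a b : V, nclose G a b =
      (Finset.univ.filter fun w => w ≠ a ∧ w ≠ b ∧ G.dist w a < G.dist w b).card := by
    intro a b
    rw [nclose, Nat.card_eq_fintype_card, Fintype.card_subtype]
    simp only [Set.mem_setOf_eq]
  rw [hc, hc]
  rw [← Finset.card_union_of_disjoint]
  · have hunion : ((Finset.univ.filter fun w => w ≠ x ∧ w ≠ y ∧ G.dist w x < G.dist w y) ∪
        (Finset.univ.filter fun w => w ≠ y ∧ w ≠ x ∧ G.dist w y < G.dist w x)) =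
        Finset.univ \ {x, y} := by
      ext w
      simp only [Finset.mem_union, Finset.mem_filter, Finset.mem_univ, true_and,
        Finset.mem_sdiff, Finset.mem_insert, Finset.mem_singleton, not_or]
      constructor
      · rintro (⟨h1, h2, _⟩ | ⟨h1, h2, _⟩) <;> exact ⟨by tauto, by tauto⟩
      · rintro ⟨h1, h2⟩
        rcases lt_or_gt_of_ne (hne w h1 h2) with hlt | hgt
        · exact Or.inl ⟨h1, h2, hlt⟩
        · exact Or.inr ⟨h2, h1, hgt⟩
    rw [hunion, Finset.card_sdiff_of_subset (Finset.subset_univ _), Finset.card_univ,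
      Finset.card_pair hxy]
  · rw [Finset.disjoint_left]
    rintro w hw hw'
    simp only [Finset.mem_filter] at hw hw'
    omega

theorem stmt_9 [Fintype V] (G : SimpleGraph V) (hG : IsCactus G)
    (h : ∀ e ∈ G.edgeSet, G.IsBridge e ∨
      ∃ (v : V) (c : G.Walk v v), c.IsCycle ∧ e ∈ c.edges ∧ Even c.length) :
    PI G = G.edgeFinset.card * (Fintype.card V - 2) := by
  classical
  obtain ⟨hconn, hcact⟩ := hG
  have hmain : ∀ e ∈ G.edgeFinset, PIedge G e = Fintype.card V - 2 := by
    intro e he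
    rw [SimpleGraph.mem_edgeFinset] at he
    induction e using Sym2.ind with
    | _ x y =>
      have hadj : G.Adj x y := he
      have hxy : x ≠ y := hadj.ne
      have hne : ∀ w, w ≠ x → w ≠ y → G.dist w x ≠ G.dist w y := by
        intro w hwx hwy heq
        obtain ⟨c, hc, hce, hodd⟩ := exists_odd_cycle G hconn hadj hwx hwy heq
        rcases h s(x, y) he with hb | ⟨v, C, hC, heC, heven⟩
        · rw [SimpleGraph.isBridge_iff_adj_and_forall_cycle_notMem he] at hb
          exact hb c hc hce
        · -- the odd cycle c and even cycle C have different edge sets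
          have hlen : c.length ≠ C.length := by
            intro hl
            rw [hl] at hodd
            exact (Nat.not_even_iff_odd.mpr hodd) heven
          have hsets : {e' | e' ∈ c.edges} ≠ {e' | e' ∈ C.edges} := by
            intro hset
            apply hlen
            have hfin : c.edges.toFinset = C.edges.toFinset := by
              ext a
              simp only [List.mem_toFinset]
              exact Set.ext_iff.mp hset a
            have h1 : c.edges.toFinset.card = c.edges.length :=
              List.toFinset_card_of_nodup hc.edges_nodup
            have h2 : C.edges.toFinset.card = C.edges.length :=
              List.toFinset_card_of_nodup hC.edges_nodup
            rw [← SimpleGraph.Walk.length_edges, ← SimpleGraph.Walk.length_edges,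
              ← h1, ← h2, hfin]
          have hle := hcact x v c C hc hC hsets
          have hsub : ({x, y} : Set V) ⊆ {a | a ∈ c.support ∧ a ∈ C.support} := by
            rintro a (rfl | rfl)
            · exact ⟨c.start_mem_support, C.fst_mem_support_of_mem_edges heC⟩
            · exact ⟨c.snd_mem_support_of_mem_edges hce,
                C.snd_mem_support_of_mem_edges heC⟩
          have h2le : 2 ≤ Set.ncard {a | a ∈ c.support ∧ a ∈ C.support} := by
            rw [← Set.ncard_pair hxy]
            exact Set.ncard_le_ncard hsub (Set.toFinite _)
          omega
      have : PIedge G s(x, y) = nclose G x y + nclose G y x := rfl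
      rw [this, nclose_add_eq G hxy hne]
  rw [PI, Finset.sum_congr rfl hmain, Finset.sum_const, smul_eq_mul]
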